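/- Let X be a T1 topological space. Call a space 'numerably paracompact' if every open cover admits a subordinate continuous partition of unity, and 'hereditarily numerably paracompact' if every open subspace is numerably paracompact. Then X is hereditarily numerably paracompact if and only if X is numerably paracompact and every point of X has a hereditarily numerably paracompact open neighborhood. -/

import Mathlib

universe u

/-- A space is *numerably paracompact* if every open cover admits a subordinate
(locally finite, continuous) partition of unity. -/
def NumerablyParacompact (Y : Type u) [TopologicalSpace Y] : Prop :=
  ∀ (ι : Type u) (U : ι → Set Y), (∀ i, IsOpen (U i)) → (⋃ i, U i) = Set.univ →
    ∃ f : PartitionOfUnity ι Y Set.univ, f.IsSubordinate U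

/-- A space is *hereditarily numerably paracompact* if every open subspace is
numerably paracompact. -/
def HeredNumerablyParacompact (Y : Type u) [TopologicalSpace Y] : Prop :=
  ∀ V : Set Y, IsOpen V → NumerablyParacompact V

open Set Function Topology Filter

theorem NumerablyParacompact.of_homeomorph {Y Z : Type u} [TopologicalSpace Y]
    [TopologicalSpace Z] (e : Y ≃ₜ Z) (h : NumerablyParacompact Y) :
    NumerablyParacompact Z := by
  intro ι U hUo hUc
  obtain ⟨f, hf⟩ := h ι (fun i => e ⁻¹' U i) (fun i => (hUo i).preimage e.continuous)
    (by rw [← Set.preimage_iUnion, hUc, Set.preimage_univ])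
  have hsupp : ∀ i, support (fun z => f i (e.symm z)) = e.symm ⁻¹' support (f i) := fun i => rfl
  refine ⟨⟨fun i => (f i).comp ⟨e.symm, e.symm.continuous⟩, ?_, ?_, ?_, ?_⟩, ?_⟩
  · simpa only [ContinuousMap.coe_comp, ContinuousMap.coe_mk, comp_def, hsupp] using
      f.locallyFinite.preimage_continuous e.symm.continuous
  · intro i z
    exact f.nonneg i (e.symm z)
  · intro z _
    exact f.sum_eq_one (mem_univ _)
  · intro z
    exact f.sum_le_one (e.symm z)
  · intro i
    show tsupport (fun z => f i (e.symm z)) ⊆ U i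
    rw [tsupport, hsupp, ← Homeomorph.preimage_closure]
    intro z hz
    have := hf i hz
    rwa [Set.mem_preimage, Homeomorph.apply_symm_apply] at this

/-- A subset of an open (in fact any) subspace is homeomorphic to its image. -/
noncomputable def subsubHomeomorph {X : Type u} [TopologicalSpace X] (s : Set X) (t : Set ↥s) :
    ↥t ≃ₜ ↥(Subtype.val '' t) :=
  (Equiv.Set.image _ t Subtype.val_injective).toHomeomorphOfIsInducing <| by
    refine IsInducing.of_comp ?_ continuous_subtype_val ?_
    · exact Continuous.subtype_mk (continuous_subtype_val.comp continuous_subtype_val) _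
    · show IsInducing fun x : ↥t => ((x : ↥s) : X)
      exact IsInducing.subtypeVal.comp IsInducing.subtypeVal

theorem image_val_setOf {X : Type u} [TopologicalSpace X] (s t : Set X) :
    Subtype.val '' {y : ↥s | ↑y ∈ t} = s ∩ t := by
  ext x; simp [Set.mem_image]; tauto

/-- Swap the order of a double subtype. -/
noncomputable def swapHomeomorph {X : Type u} [TopologicalSpace X] (s t : Set X) :
    ↥{y : ↥s | ↑y ∈ t} ≃ₜ ↥{y : ↥t | ↑y ∈ s} :=
  (subsubHomeomorph s _).trans <| (Homeomorph.setCongr (by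
    rw [image_val_setOf, image_val_setOf, Set.inter_comm])).trans (subsubHomeomorph t _).symm

theorem HeredNumerablyParacompact.of_open {X : Type u} [TopologicalSpace X]
    (h : HeredNumerablyParacompact X) {s : Set X} (hs : IsOpen s) :
    HeredNumerablyParacompact ↥s := by
  intro V hV
  exact (h _ (hs.isOpenMap_subtype_val V hV)).of_homeomorph (subsubHomeomorph s V).symm

section main
variable {X : Type u} [TopologicalSpace X]

theorem backward [T1Space X] (hX : NumerablyParacompact X)
    (hloc : ∀ x : X, ∃ U : Set X, IsOpen U ∧ x ∈ U ∧ HeredNumerablyParacompact U) :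
    HeredNumerablyParacompact X := by
  intro V hV ι U hUo hUc
  classical
  choose W hWo hWmem hWh using hloc
  obtain ⟨ψ, hψ⟩ := hX X W hWo (eq_univ_of_forall fun x => mem_iUnion.2 ⟨x, hWmem x⟩)
  set S : X → Set ↥V := fun x => {y : ↥V | (y : X) ∈ W x} with hS
  have hSo : ∀ x, IsOpen (S x) := fun x => (hWo x).preimage continuous_subtype_val
  have hSnp : ∀ x, NumerablyParacompact ↥(S x) := fun x =>
    (hWh x {z : ↥(W x) | (z : X) ∈ V} (hV.preimage continuous_subtype_val)).of_homeomorph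
      (swapHomeomorph V (W x)).symm
  have hcov : ∀ x : X, ∃ φ : PartitionOfUnity ι ↥(S x) univ,
      φ.IsSubordinate fun i => (fun y : ↥(S x) => (y : ↥V)) ⁻¹' U i := by
    intro x
    refine hSnp x ι _ (fun i => (hUo i).preimage continuous_subtype_val) ?_
    rw [← preimage_iUnion, hUc, preimage_univ]
  choose φ hφ using hcov
  -- the (pre-reindexed) family of functions
  set F : X × ι → ↥V → ℝ := fun p y =>
    if h : y ∈ S p.1 then ψ p.1 ↑y * φ p.1 p.2 ⟨y, h⟩ else 0 with hF
  have hF0 : ∀ p (y : ↥V), y ∉ S p.1 → F p y = 0 := fun p y h => dif_neg h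
  have hFS : ∀ p (y : ↥V) (h : y ∈ S p.1), F p y = ψ p.1 ↑y * φ p.1 p.2 ⟨y, h⟩ :=
    fun p y h => dif_pos h
  have hFpos : ∀ p (y : ↥V), 0 ≤ F p y := by
    intro p y
    by_cases h : y ∈ S p.1
    · rw [hFS p y h]; exact mul_nonneg (ψ.nonneg _ _) ((φ p.1).nonneg _ _)
    · rw [hF0 p y h]
  have hFne : ∀ p (y : ↥V), F p y ≠ 0 →
      ψ p.1 ↑y ≠ 0 ∧ ∃ h : y ∈ S p.1, φ p.1 p.2 ⟨y, h⟩ ≠ 0 := by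
    intro p y hy
    by_cases h : y ∈ S p.1
    · rw [hFS p y h] at hy
      exact ⟨left_ne_zero_of_mul hy, h, right_ne_zero_of_mul hy⟩
    · exact absurd (hF0 p y h) hy
  have hTzero : ∀ p (y : ↥V), (y : X) ∉ tsupport (ψ p.1) → F p y = 0 := by
    intro p y hy
    by_cases h : y ∈ S p.1
    · rw [hFS p y h, image_eq_zero_of_notMem_tsupport hy, zero_mul]
    · exact hF0 p y h
  have hmemS : ∀ (x : X) (y : ↥V), (y : X) ∈ tsupport (ψ x) → y ∈ S x :=
    fun x y hy => hψ x hy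
  -- continuity
  have hFc : ∀ p, Continuous (F p) := by
    intro p
    rw [continuous_iff_continuousAt]
    intro y
    by_cases h : y ∈ S p.1
    · have he : IsOpenEmbedding ((↑) : ↥(S p.1) → ↥V) :=
        (hSo p.1).isOpenEmbedding_subtypeVal
      have : ContinuousAt (F p ∘ ((↑) : ↥(S p.1) → ↥V)) ⟨y, h⟩ := by
        have heq : (F p ∘ ((↑) : ↥(S p.1) → ↥V)) =
            fun z : ↥(S p.1) => ψ p.1 ↑↑z * φ p.1 p.2 z := by
          funext z
          simp only [comp_apply, hFS p _ z.2, Subtype.coe_eta]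
        rw [heq]
        exact (((ψ p.1).continuous.comp
          (continuous_subtype_val.comp continuous_subtype_val)).mul
          (φ p.1 p.2).continuous).continuousAt
      exact he.continuousAt_iff.mp this
    · have hy : (y : X) ∉ tsupport (ψ p.1) := fun hc => h (hmemS p.1 y hc)
      refine Filter.EventuallyEq.continuousAt (y := (0 : ℝ)) ?_
      filter_upwards [((isClosed_tsupport (ψ p.1)).isOpen_compl.preimage
        continuous_subtype_val).mem_nhds hy] with y' hy'
      exact hTzero p y' hy'
  -- local finiteness
  have hLF : LocallyFinite fun p => support (F p) := by
    intro y
    obtain ⟨N, hN, hNfin⟩ := ψ.locallyFinite (y : X)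
    have key : ∀ x : X, ∃ Nx ∈ 𝓝 y,
        {i : ι | (support (F (x, i)) ∩ Nx).Nonempty}.Finite := by
      intro x
      by_cases h : y ∈ S x
      · obtain ⟨M, hM, hMfin⟩ := (φ x).locallyFinite ⟨y, h⟩
        refine ⟨Subtype.val '' M, ((hSo x).isOpenMap_subtype_val).image_mem_nhds hM, ?_⟩
        refine hMfin.subset ?_
        rintro i ⟨y', hy'F, z, hzM, rfl⟩
        obtain ⟨-, hz, hne⟩ := hFne (x, i) _ hy'F
        refine ⟨z, ?_, hzM⟩
        simpa only [mem_support, Subtype.coe_eta] using hne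
      · have hy : (y : X) ∉ tsupport (ψ x) := fun hc => h (hmemS x y hc)
        refine ⟨Subtype.val ⁻¹' (tsupport (ψ x))ᶜ,
          ((isClosed_tsupport (ψ x)).isOpen_compl.preimage
            continuous_subtype_val).mem_nhds hy, ?_⟩
        convert Set.finite_empty
        rw [eq_empty_iff_forall_notMem]
        rintro i ⟨y', hy'F, hy'⟩
        exact hy'F (hTzero (x, i) y' hy')
    choose Nx hNx hNxfin using key
    refine ⟨(Subtype.val ⁻¹' N) ∩ ⋂ x ∈ hNfin.toFinset, Nx x,
      Filter.inter_mem (continuous_subtype_val.continuousAt.preimage_mem_nhds hN)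
        ((biInter_finset_mem _).2 fun x _ => hNx x), ?_⟩
    refine (((hNfin.biUnion fun x _ => (hNxfin x).image fun i => (x, i))).subset ?_)
    rintro ⟨x, i⟩ ⟨y', hy'F, hy'N, hy'I⟩
    have hx : x ∈ {x | (support (ψ x) ∩ N).Nonempty} :=
      ⟨y', (hFne (x, i) y' hy'F).1, hy'N⟩
    refine mem_biUnion hx ⟨i, ⟨y', hy'F, ?_⟩, rfl⟩
    exact mem_iInter₂.mp hy'I x (hNfin.mem_toFinset.mpr hx)
  -- pointwise finite support and the sum
  have hPF : ∀ y : ↥V, (support fun p => F p y).Finite := fun y => by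
    exact hLF.point_finite y
  have hinner : ∀ (x : X) (y : ↥V), ∑ᶠ i, F (x, i) y = ψ x ↑y := by
    intro x y
    by_cases h : y ∈ S x
    · have : ∀ i, F (x, i) y = ψ x ↑y * φ x i ⟨y, h⟩ := fun i => hFS (x, i) y h
      rw [finsum_congr this, ← mul_finsum' _ _ ?_, (φ x).sum_eq_one (mem_univ _), mul_one]
      exact (φ x).locallyFinite.point_finite ⟨y, h⟩
    · have h0 : ψ x ↑y = 0 := by
        by_contra hne
        exact h (hmemS x y (subset_closure hne))
      rw [h0]
      exact finsum_eq_zero_of_forall_eq_zero fun i => hF0 (x, i) y h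
  have hFsum : ∀ y : ↥V, ∑ᶠ p : X × ι, F p y = 1 := by
    intro y
    rw [finsum_curry _ (hPF y), finsum_congr fun x => hinner x y]
    exact ψ.sum_eq_one (mem_univ _)
  -- reindex: sum over the first coordinate
  set g : ι → ↥V → ℝ := fun i y => ∑ᶠ x : X, F (x, i) y with hg
  have hLFi : ∀ i, LocallyFinite fun x : X => support (F (x, i)) := fun i =>
    hLF.comp_injective fun a b hab => congrArg Prod.fst hab
  have hgc : ∀ i, Continuous (g i) := fun i =>
    continuous_finsum (fun x => hFc (x, i)) (hLFi i)
  have hgne : ∀ i (y : ↥V), g i y ≠ 0 → ∃ x, F (x, i) y ≠ 0 := by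
    intro i y hy
    by_contra hc
    push_neg at hc
    exact hy (finsum_eq_zero_of_forall_eq_zero fun x => hc x)
  have hgsum : ∀ y : ↥V, ∑ᶠ i, g i y = 1 := by
    intro y
    have hfin : (support fun q : ι × X => F (q.2, q.1) y).Finite := by
      have : (support fun q : ι × X => F (q.2, q.1) y) =
          (Equiv.prodComm ι X) ⁻¹' (support fun p => F p y) := rfl
      rw [this]
      exact (hPF y).preimage (Equiv.injective _).injOn
    calc ∑ᶠ i, g i y = ∑ᶠ (i) (x), F (x, i) y := rfl
      _ = ∑ᶠ q : ι × X, F (q.2, q.1) y := (finsum_curry _ hfin).symm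
      _ = ∑ᶠ p : X × ι, F p y := finsum_comp_equiv (Equiv.prodComm ι X) (f := fun p : X × ι => F p y)
      _ = 1 := hFsum y
  refine ⟨⟨fun i => ⟨g i, hgc i⟩, ?_, ?_, ?_, ?_⟩, ?_⟩
  · intro y
    obtain ⟨N, hN, hfin⟩ := hLF y
    refine ⟨N, hN, (hfin.image Prod.snd).subset ?_⟩
    rintro i ⟨y', hy', hy'N⟩
    obtain ⟨x, hx⟩ := hgne i y' hy'
    exact ⟨(x, i), ⟨y', hx, hy'N⟩, rfl⟩
  · intro i y
    exact finsum_nonneg fun x => hFpos (x, i) y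
  · intro y _
    exact hgsum y
  · intro y
    exact le_of_eq (hgsum y)
  · intro i
    show tsupport (g i) ⊆ U i
    have hsub : tsupport (g i) ⊆ ⋃ x, tsupport (F (x, i)) := by
      simp only [tsupport]
      rw [← (hLFi i).closure_iUnion]
      refine closure_mono fun y hy => ?_
      obtain ⟨x, hx⟩ := hgne i y hy
      exact mem_iUnion.2 ⟨x, hx⟩
    refine hsub.trans (iUnion_subset fun x y hy => ?_)
    have h1 : support (F (x, i)) ⊆ (Subtype.val : ↥V → X) ⁻¹' tsupport (ψ x) :=
      fun y' hy' => subset_closure (hFne (x, i) y' hy').1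
    have hyS : y ∈ S x := by
      refine hmemS x y ?_
      have hcl : closure ((Subtype.val : ↥V → X) ⁻¹' tsupport (ψ x)) =
          (Subtype.val : ↥V → X) ⁻¹' tsupport (ψ x) :=
        ((isClosed_tsupport (ψ x)).preimage continuous_subtype_val).closure_eq
      have := closure_mono h1 hy
      rwa [hcl] at this
    have h2 : support (F (x, i)) ⊆ Subtype.val '' support (φ x i) := by
      intro y' hy'
      obtain ⟨-, hz, hne⟩ := hFne (x, i) y' hy'
      exact ⟨⟨y', hz⟩, hne, rfl⟩
    have h4 : (⟨y, hyS⟩ : ↥(S x)) ∈ tsupport (φ x i) := by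
      rw [tsupport, closure_subtype]
      exact closure_mono h2 hy
    exact hφ x i h4

/-- Local-to-global criterion for hereditary numerable paracompactness of a `T₁` space. -/
theorem stmt3 (X : Type u) [TopologicalSpace X] [T1Space X] :
    HeredNumerablyParacompact X ↔
      NumerablyParacompact X ∧
        ∀ x : X, ∃ U : Set X, IsOpen U ∧ x ∈ U ∧ HeredNumerablyParacompact U := by
  constructor
  · intro h
    exact ⟨(h Set.univ isOpen_univ).of_homeomorph (Homeomorph.Set.univ X),
      fun x => ⟨Set.univ, isOpen_univ, Set.mem_univ x, h.of_open isOpen_univ⟩⟩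
  · rintro ⟨hX, hloc⟩
    exact backward hX hloc

end main
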